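/- Let K be a field, R a unital amenable affine K-algebra with a fixed Følner exhaustion {W_n}, and ω a nonprincipal ultrafilter on ℕ. Let M be a finitely generated left R-module. If {x_1, …, x_r} and {y_1, …, y_s} are two generating systems of M, then lim_ω dim_K(W_nx_1 + ⋯ + W_nx_r)/dim_K(W_n) = lim_ω dim_K(W_ny_1 + ⋯ + W_ny_s)/dim_K(W_n); moreover this common value (the rank of M) is at most the minimal number of elements generating M. -/
import Mathlib

open Filter Module

/-- `W·r`: the image of the finite dimensional subspace `W` under right multiplication
by `r`. -/
noncomputable def rightMulSubmodule (K : Type*) [Field K] {R : Type*} [Ring R] [Algebra K R]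
    (W : Submodule K R) (r : R) : Submodule K R :=
  W.map (LinearMap.mulRight K r)

/-- A Følner exhaustion of a `K`-algebra `R`: an increasing sequence of finite dimensional
subspaces exhausting `R` such that for every `r ∈ R`,
`dim (Wₙ·r + Wₙ) / dim Wₙ → 1`. -/
def FolnerExhaustion (K : Type*) [Field K] (R : Type*) [Ring R] [Algebra K R]
    (W : ℕ → Submodule K R) : Prop :=
  Monotone W ∧ (∀ n, FiniteDimensional K (W n)) ∧ (∀ x : R, ∃ n, x ∈ W n) ∧
    ∀ r : R,
      Tendsto (fun n => (finrank K ↥(rightMulSubmodule K (W n) r ⊔ W n) : ℝ) / finrank K (W n))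
        atTop (nhds 1)

/-- An affine algebra is (left) amenable if it admits a Følner exhaustion. -/
def AmenableAlgebra (K : Type*) [Field K] (R : Type*) [Ring R] [Algebra K R] : Prop :=
  ∃ W : ℕ → Submodule K R, FolnerExhaustion K R W


/-- The ultralimit of a real sequence along an ultrafilter `ω`: the limit of the sequence
along `ω` (for bounded sequences this limit exists and is unique). -/
noncomputable def ultralim (ω : Ultrafilter ℕ) (f : ℕ → ℝ) : ℝ :=
  limUnder (ω : Filter ℕ) f

/-- The sequence `n ↦ dim_K(Wₙx₁ + ⋯ + Wₙx_r) / dim_K(Wₙ)` attached to a family of elements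
`x₁, …, x_r` of a left `R`-module `M`, where `Wₙ·x = {wx : w ∈ Wₙ}`. -/
noncomputable def rankSeq (K : Type*) [Field K] (R : Type*) [Ring R] [Algebra K R]
    (W : ℕ → Submodule K R) {M : Type*} [AddCommGroup M] [Module K M] [Module R M]
    [IsScalarTower K R M] {r : ℕ} (x : Fin r → M) (n : ℕ) : ℝ :=
  (finrank K ↥(⨆ i, (W n).map ((LinearMap.toSpanSingleton R M (x i)).restrictScalars K)) : ℝ) /
    finrank K (W n)

/-! ### Auxiliary lemmas -/

instance rightMulSubmodule.finiteDimensional (K : Type*) [Field K] {R : Type*} [Ring R]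
    [Algebra K R] (W : Submodule K R) [FiniteDimensional K W] (c : R) :
    FiniteDimensional K (rightMulSubmodule K W c) :=
  inferInstanceAs (FiniteDimensional K (W.map (LinearMap.mulRight K c)))

section Vec

variable {K : Type*} [Field K] {V : Type*} [AddCommGroup V] [Module K V]

lemma my_finrank_finset_sup_le {ι : Type*} (s : Finset ι) (B : ι → Submodule K V)
    [∀ i, FiniteDimensional K (B i)] :
    finrank K ↥(s.sup B) ≤ ∑ i ∈ s, finrank K (B i) := by
  classical
  induction s using Finset.induction with
  | empty => simp
  | @insert a s ha ih =>
      rw [Finset.sup_insert, Finset.sum_insert ha]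
      exact le_trans (Submodule.finrank_add_le_finrank_add_finrank _ _)
        (by omega)

lemma my_finrank_iSup_le {ι : Type*} [Fintype ι] (B : ι → Submodule K V)
    [∀ i, FiniteDimensional K (B i)] :
    finrank K ↥(⨆ i, B i) ≤ ∑ i, finrank K (B i) := by
  rw [← Finset.sup_univ_eq_iSup]
  exact my_finrank_finset_sup_le _ _

lemma my_fd_biSup {ι : Type*} (s : Finset ι) (B : ι → Submodule K V)
    [∀ i, FiniteDimensional K (B i)] : FiniteDimensional K ↥(⨆ i ∈ s, B i) := by
  have h : (⨆ i ∈ s, B i) = s.sup B := (Finset.sup_eq_iSup s B).symm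
  rw [h]; infer_instance

/-- Følner counting lemma: the dimension of `W ⊔ ⨆ Bᵢ` exceeds that of `W` by at most the
sum of the excesses of the `W ⊔ Bᵢ`. -/
lemma my_folner_count {ι : Type*} (s : Finset ι) (B : ι → Submodule K V)
    [∀ i, FiniteDimensional K (B i)] (Wn : Submodule K V) [FiniteDimensional K Wn] :
    finrank K ↥(Wn ⊔ ⨆ i ∈ s, B i) + s.card * finrank K Wn ≤
      finrank K Wn + ∑ i ∈ s, finrank K ↥(Wn ⊔ B i) := by
  classical
  induction s using Finset.induction with
  | empty =>
      rw [show (⨆ i ∈ (∅ : Finset ι), B i) = ⊥ from by simp, sup_bot_eq]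
      simp
  | @insert a s ha ih =>
      haveI := my_fd_biSup s B
      have hsplit : Wn ⊔ ⨆ i ∈ insert a s, B i =
          (Wn ⊔ B a) ⊔ (Wn ⊔ ⨆ i ∈ s, B i) := by
        rw [Finset.iSup_insert, sup_sup_distrib_left]
      have h1 := Submodule.finrank_sup_add_finrank_inf_eq (Wn ⊔ B a) (Wn ⊔ ⨆ i ∈ s, B i)
      have h2 : finrank K Wn ≤ finrank K ↥((Wn ⊔ B a) ⊓ (Wn ⊔ ⨆ i ∈ s, B i)) :=
        Submodule.finrank_mono (le_inf le_sup_left le_sup_left)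
      rw [hsplit, Finset.sum_insert ha, Finset.card_insert_of_notMem ha, add_mul, one_mul]
      set c := s.card * finrank K Wn
      omega

end Vec

section Alg

variable {K : Type*} [Field K] {R : Type*} [Ring R] [Algebra K R]
  {M : Type*} [AddCommGroup M] [Module K M] [Module R M] [IsScalarTower K R M]

/-- Comparison of the dimensions of `⨆ U·xᵢ` and `⨆ W·xᵢ` for `W ≤ U`. -/
lemma my_map_count {r : ℕ} (Wn U : Submodule K R) (hWU : Wn ≤ U) [FiniteDimensional K U]
    (f : Fin r → (R →ₗ[K] M)) :
    finrank K ↥(⨆ i, U.map (f i)) + r * finrank K Wn ≤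
      finrank K ↥(⨆ i, Wn.map (f i)) + r * finrank K U := by
  haveI : FiniteDimensional K Wn := Submodule.finiteDimensional_of_le hWU
  obtain ⟨C', hC'⟩ := Submodule.exists_isCompl (Wn.comap U.subtype)
  set C := C'.map U.subtype with hCdef
  have hmapW : (Wn.comap U.subtype).map U.subtype = Wn := by
    rw [Submodule.map_comap_subtype, inf_of_le_right hWU]
  have hsup : Wn ⊔ C = U := by
    have h1 : (Wn.comap U.subtype ⊔ C').map U.subtype = U := by
      rw [hC'.codisjoint.eq_top, Submodule.map_top, Submodule.range_subtype]
    rwa [Submodule.map_sup, hmapW] at h1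
  haveI : FiniteDimensional K ↥C := inferInstanceAs (FiniteDimensional K (C'.map U.subtype))
  have hrank : finrank K Wn + finrank K ↥C = finrank K ↥U := by
    have h := Submodule.finrank_add_eq_of_isCompl hC'
    have e1 : finrank K ↥((Wn.comap U.subtype).map U.subtype) = finrank K (Wn.comap U.subtype) :=
      Submodule.finrank_map_subtype_eq _ _
    have e2 : finrank K ↥C = finrank K C' := Submodule.finrank_map_subtype_eq _ _
    rw [hmapW] at e1
    rw [e1, e2]; exact h
  have hmap : (⨆ i, U.map (f i)) = (⨆ i, Wn.map (f i)) ⊔ ⨆ i, C.map (f i) := by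
    rw [← iSup_sup_eq]
    simp_rw [← hsup, Submodule.map_sup]
  have h3 : finrank K ↥(⨆ i, U.map (f i)) ≤
      finrank K ↥(⨆ i, Wn.map (f i)) + r * finrank K ↥C := by
    rw [hmap]
    refine (Submodule.finrank_add_le_finrank_add_finrank _ _).trans ?_
    have h4 : finrank K ↥(⨆ i, C.map (f i)) ≤ r * finrank K ↥C := by
      refine (my_finrank_iSup_le _).trans ?_
      calc ∑ i : Fin r, finrank K ↥(C.map (f i)) ≤ ∑ _i : Fin r, finrank K ↥C :=
              Finset.sum_le_sum fun i _ => Submodule.finrank_map_le _ _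
        _ = r * finrank K ↥C := by simp [Finset.sum_const, mul_comm]
    omega
  have : r * finrank K ↥U = r * finrank K Wn + r * finrank K ↥C := by
    rw [← hrank, mul_add]
  omega

/-- If `y = ∑ aᵢ • xᵢ` then `W·y ⊆ ⨆ U·xᵢ` whenever `W·aᵢ ≤ U` for all `i`. -/
lemma my_map_le_iSup {r : ℕ} (Wn U : Submodule K R) (a : Fin r → R) (x : Fin r → M)
    (hU : ∀ i, rightMulSubmodule K Wn (a i) ≤ U) :
    Wn.map ((LinearMap.toSpanSingleton R M (∑ i, a i • x i)).restrictScalars K) ≤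
      ⨆ i, U.map ((LinearMap.toSpanSingleton R M (x i)).restrictScalars K) := by
  rintro _ ⟨w, hw, rfl⟩
  have hval : (LinearMap.toSpanSingleton R M (∑ i, a i • x i)).restrictScalars K w =
      ∑ i, (w * a i) • x i := by
    simp only [LinearMap.coe_restrictScalars, LinearMap.toSpanSingleton_apply,
      Finset.smul_sum, smul_smul]
  rw [hval]
  refine Submodule.sum_mem _ fun i _ => Submodule.mem_iSup_of_mem i ?_
  refine ⟨w * a i, hU i ⟨w, hw, rfl⟩, ?_⟩
  simp [LinearMap.toSpanSingleton_apply]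

variable (K R) in
/-- Eventually the Følner subspaces have positive dimension. -/
lemma my_finrank_W_pos {W : ℕ → Submodule K R} (hW : FolnerExhaustion K R W) :
    ∀ᶠ n in atTop, 0 < finrank K (W n) := by
  have h := hW.2.2.2 1
  filter_upwards [h.eventually (lt_mem_nhds (show (0:ℝ) < 1 by norm_num))] with n hn
  by_contra hzero
  push_neg at hzero
  have h0 : finrank K ↥(W n) = 0 := Nat.le_zero.mp hzero
  rw [h0] at hn
  simp at hn

/-- The key estimate: if `x` generates `M`, then for any family `y`,
`rankSeq y ≤ rankSeq x + e` for a sequence `e → 0`. -/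
lemma my_rankSeq_le {W : ℕ → Submodule K R} (hW : FolnerExhaustion K R W)
    {r s : ℕ} (x : Fin r → M) (y : Fin s → M)
    (hx : Submodule.span R (Set.range x) = ⊤) :
    ∃ e : ℕ → ℝ, Tendsto e atTop (nhds 0) ∧
      ∀ᶠ n in atTop, rankSeq K R W y n ≤ rankSeq K R W x n + e n := by
  classical
  haveI := hW.2.1
  have hcoef : ∀ j : Fin s, ∃ a : Fin r → R, ∑ i, a i • x i = y j := by
    intro j
    have hmem : y j ∈ Submodule.span R (Set.range x) := hx ▸ Submodule.mem_top
    exact (Submodule.mem_span_range_iff_exists_fun R).mp hmem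
  choose a ha using hcoef
  set U : ℕ → Submodule K R :=
    fun n => W n ⊔ ⨆ p : Fin s × Fin r, rightMulSubmodule K (W n) (a p.1 p.2) with hUdef
  haveI hfdU : ∀ n, FiniteDimensional K (U n) := fun n => by
    rw [hUdef]; infer_instance
  set e : ℕ → ℝ := fun n => r * ((finrank K ↥(U n) : ℝ) / ((finrank K ↥(W n) : ℝ)) - 1) with hedef
  have hpos := my_finrank_W_pos K R hW
  -- the counting bound for `U n`
  have hUbound : ∀ n, finrank K ↥(U n) + (s * r) * finrank K ↥(W n) ≤
      finrank K ↥(W n) + ∑ p : Fin s × Fin r,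
        finrank K ↥(rightMulSubmodule K (W n) (a p.1 p.2) ⊔ W n) := by
    intro n
    have h := my_folner_count (Finset.univ : Finset (Fin s × Fin r))
      (fun p => rightMulSubmodule K (W n) (a p.1 p.2)) (W n)
    simp only [Finset.card_univ, Fintype.card_prod, Fintype.card_fin] at h
    have hiSup : (⨆ p ∈ Finset.univ, rightMulSubmodule K (W n) (a (p : Fin s × Fin r).1 p.2)) =
        ⨆ p : Fin s × Fin r, rightMulSubmodule K (W n) (a p.1 p.2) := by
      simp
    rw [hiSup] at h
    refine le_trans ?_ (h.trans (le_of_eq ?_))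
    · exact Nat.add_le_add_right (le_of_eq rfl) _
    · congr 1
      exact Finset.sum_congr rfl fun p _ => by rw [sup_comm]
  -- convergence of `finrank (U n) / ((finrank K ↥(W n) : ℝ))` to 1
  have hUtendsto : Tendsto (fun n => (finrank K ↥(U n) : ℝ) / ((finrank K ↥(W n) : ℝ))) atTop (nhds 1) := by
    have hlower : ∀ᶠ n in atTop, (1 : ℝ) ≤ (finrank K ↥(U n) : ℝ) / ((finrank K ↥(W n) : ℝ)) := by
      filter_upwards [hpos] with n hn
      have hDpos : (0:ℝ) < ((finrank K ↥(W n) : ℝ)) := by exact_mod_cast hn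
      rw [le_div_iff₀ hDpos, one_mul]
      have : finrank K ↥(W n) ≤ finrank K ↥(U n) :=
        Submodule.finrank_mono le_sup_left
      exact_mod_cast this
    have hupper : ∀ᶠ n in atTop, (finrank K ↥(U n) : ℝ) / ((finrank K ↥(W n) : ℝ)) ≤
        1 + ∑ p : Fin s × Fin r,
          ((finrank K ↥(rightMulSubmodule K (W n) (a p.1 p.2) ⊔ W n) : ℝ) / ((finrank K ↥(W n) : ℝ)) - 1) := by
      filter_upwards [hpos] with n hn
      have hDpos : (0:ℝ) < ((finrank K ↥(W n) : ℝ)) := by exact_mod_cast hn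
      have h := hUbound n
      have hcast : (finrank K ↥(U n) : ℝ) + (s * r) * ((finrank K ↥(W n) : ℝ)) ≤
          ((finrank K ↥(W n) : ℝ)) + ∑ p : Fin s × Fin r,
            (finrank K ↥(rightMulSubmodule K (W n) (a p.1 p.2) ⊔ W n) : ℝ) := by
        exact_mod_cast h
      rw [div_le_iff₀ hDpos]
      have hexp : (1 + ∑ p : Fin s × Fin r,
          ((finrank K ↥(rightMulSubmodule K (W n) (a p.1 p.2) ⊔ W n) : ℝ) / ((finrank K ↥(W n) : ℝ)) - 1)) * ((finrank K ↥(W n) : ℝ)) =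
          ((finrank K ↥(W n) : ℝ)) + ∑ p : Fin s × Fin r,
            (finrank K ↥(rightMulSubmodule K (W n) (a p.1 p.2) ⊔ W n) : ℝ)
          - (s * r) * ((finrank K ↥(W n) : ℝ)) := by
        rw [add_mul, one_mul, Finset.sum_mul]
        have : ∀ p : Fin s × Fin r,
            ((finrank K ↥(rightMulSubmodule K (W n) (a p.1 p.2) ⊔ W n) : ℝ) / ((finrank K ↥(W n) : ℝ)) - 1) * ((finrank K ↥(W n) : ℝ)) =
            (finrank K ↥(rightMulSubmodule K (W n) (a p.1 p.2) ⊔ W n) : ℝ) - ((finrank K ↥(W n) : ℝ)) := by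
          intro p
          field_simp
        rw [Finset.sum_congr rfl fun p _ => this p, Finset.sum_sub_distrib]
        simp [Finset.sum_const, Finset.card_univ]
        ring
      rw [hexp]
      linarith
    have hup_tendsto : Tendsto (fun n => 1 + ∑ p : Fin s × Fin r,
        ((finrank K ↥(rightMulSubmodule K (W n) (a p.1 p.2) ⊔ W n) : ℝ) / ((finrank K ↥(W n) : ℝ)) - 1))
        atTop (nhds 1) := by
      have hsum : Tendsto (fun n => ∑ p : Fin s × Fin r,
          ((finrank K ↥(rightMulSubmodule K (W n) (a p.1 p.2) ⊔ W n) : ℝ) / ((finrank K ↥(W n) : ℝ)) - 1))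
          atTop (nhds (∑ _p : Fin s × Fin r, ((1:ℝ) - 1))) := by
        refine tendsto_finset_sum _ fun p _ => ?_
        exact (hW.2.2.2 (a p.1 p.2)).sub tendsto_const_nhds
      have := tendsto_const_nhds (x := (1:ℝ)) (f := atTop (α := ℕ)) |>.add hsum
      simpa using this
    exact tendsto_of_tendsto_of_tendsto_of_le_of_le' tendsto_const_nhds hup_tendsto hlower hupper
  refine ⟨e, ?_, ?_⟩
  · have := (hUtendsto.sub (tendsto_const_nhds (x := (1:ℝ)))).const_mul (r : ℝ)
    simpa [hedef] using this
  · filter_upwards [hpos] with n hn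
    have hDpos : (0:ℝ) < ((finrank K ↥(W n) : ℝ)) := by exact_mod_cast hn
    -- the three subspaces
    set Sy := ⨆ j, (W n).map ((LinearMap.toSpanSingleton R M (y j)).restrictScalars K) with hSy
    set Sx := ⨆ i, (W n).map ((LinearMap.toSpanSingleton R M (x i)).restrictScalars K) with hSx
    set T := ⨆ i, (U n).map ((LinearMap.toSpanSingleton R M (x i)).restrictScalars K) with hT
    have hST : Sy ≤ T := by
      refine iSup_le fun j => ?_
      have := my_map_le_iSup (Wn := W n) (U := U n) (a := a j) (x := x) ?_
      · rw [ha j] at this; exact this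
      · intro i
        exact le_sup_of_le_right (le_iSup (fun p : Fin s × Fin r =>
          rightMulSubmodule K (W n) (a p.1 p.2)) (j, i))
    have h2 : finrank K ↥Sy ≤ finrank K ↥T := Submodule.finrank_mono hST
    have h3 := my_map_count (Wn := W n) (U := U n) le_sup_left
      (fun i => (LinearMap.toSpanSingleton R M (x i)).restrictScalars K)
    have hcomb : finrank K ↥Sy + r * finrank K ↥(W n) ≤
        finrank K ↥Sx + r * finrank K ↥(U n) := by
      have := Nat.add_le_add_right h2 (r * finrank K ↥(W n))
      exact this.trans h3
    have hcast : (finrank K ↥Sy : ℝ) ≤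
        (finrank K ↥Sx : ℝ) + r * (finrank K ↥(U n) : ℝ) - r * ((finrank K ↥(W n) : ℝ)) := by
      have : (finrank K ↥Sy : ℝ) + r * ((finrank K ↥(W n) : ℝ)) ≤
          (finrank K ↥Sx : ℝ) + r * (finrank K ↥(U n) : ℝ) := by exact_mod_cast hcomb
      linarith
    have hdiv : (finrank K ↥Sy : ℝ) / ((finrank K ↥(W n) : ℝ)) ≤
        ((finrank K ↥Sx : ℝ) + r * (finrank K ↥(U n) : ℝ) - r * ((finrank K ↥(W n) : ℝ))) / ((finrank K ↥(W n) : ℝ)) :=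
      (div_le_div_iff_of_pos_right hDpos).mpr hcast
    have hrw : ((finrank K ↥Sx : ℝ) + r * (finrank K ↥(U n) : ℝ) - r * ((finrank K ↥(W n) : ℝ))) / ((finrank K ↥(W n) : ℝ)) =
        (finrank K ↥Sx : ℝ) / ((finrank K ↥(W n) : ℝ)) + r * ((finrank K ↥(U n) : ℝ) / ((finrank K ↥(W n) : ℝ)) - 1) := by
      field_simp
      ring
    rw [hrw] at hdiv
    show (finrank K ↥Sy : ℝ) / (finrank K ↥(W n) : ℝ) ≤
      (finrank K ↥Sx : ℝ) / (finrank K ↥(W n) : ℝ) + e n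
    simp only [hedef] at hdiv ⊢
    exact hdiv

/-- `rankSeq` takes values in `[0, r]`. -/
lemma my_rankSeq_mem_Icc (W : ℕ → Submodule K R) (hW : FolnerExhaustion K R W)
    {r : ℕ} (x : Fin r → M) (n : ℕ) :
    rankSeq K R W x n ∈ Set.Icc (0 : ℝ) r := by
  haveI := hW.2.1
  constructor
  · apply div_nonneg <;> positivity
  · rcases Nat.eq_zero_or_pos (finrank K ↥(W n)) with h | h
    · simp only [rankSeq, h, Nat.cast_zero, div_zero]
      positivity
    · have hDpos : (0:ℝ) < (finrank K ↥(W n) : ℝ) := by exact_mod_cast h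
      rw [rankSeq, div_le_iff₀ hDpos]
      have hb : finrank K ↥(⨆ i, (W n).map
          ((LinearMap.toSpanSingleton R M (x i)).restrictScalars K)) ≤
          r * finrank K ↥(W n) := by
        refine (my_finrank_iSup_le _).trans ?_
        calc ∑ i : Fin r, finrank K ↥((W n).map
              ((LinearMap.toSpanSingleton R M (x i)).restrictScalars K)) ≤
            ∑ _i : Fin r, finrank K ↥(W n) :=
              Finset.sum_le_sum fun i _ => Submodule.finrank_map_le _ _
          _ = r * finrank K ↥(W n) := by simp [Finset.sum_const, mul_comm]
      exact_mod_cast hb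

end Alg

/-- A sequence with values in a compact interval converges along every ultrafilter,
to its ultralimit. -/
lemma my_tendsto_ultralim (ω : Ultrafilter ℕ) {f : ℕ → ℝ} {C : ℝ}
    (hf : ∀ n, f n ∈ Set.Icc (0 : ℝ) C) :
    Tendsto f ω (nhds (ultralim ω f)) := by
  have hle : ↑(ω.map f) ≤ Filter.principal (Set.Icc (0:ℝ) C) := by
    rw [Ultrafilter.coe_map, le_principal_iff, Filter.mem_map]
    exact Filter.univ_mem' hf
  obtain ⟨a, -, ha⟩ := (isCompact_Icc (a := (0:ℝ)) (b := C)).ultrafilter_le_nhds (ω.map f) hle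
  rw [Ultrafilter.coe_map] at ha
  have ha' : Tendsto f ω (nhds a) := ha
  have h2 : ultralim ω f = a := ha'.limUnder_eq
  rw [h2]
  exact ha'

section Final

variable {K : Type*} [Field K] {R : Type*} [Ring R] [Algebra K R]
  {M : Type*} [AddCommGroup M] [Module K M] [Module R M] [IsScalarTower K R M]

lemma my_ultralim_le {W : ℕ → Submodule K R} (hW : FolnerExhaustion K R W)
    (ω : Ultrafilter ℕ) (hω : (ω : Filter ℕ) ≤ Filter.cofinite)
    {r s : ℕ} (x : Fin r → M) (y : Fin s → M)
    (hx : Submodule.span R (Set.range x) = ⊤) :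
    ultralim ω (rankSeq K R W y) ≤ ultralim ω (rankSeq K R W x) := by
  have hωT : (ω : Filter ℕ) ≤ atTop := by rwa [← Nat.cofinite_eq_atTop]
  have hty := my_tendsto_ultralim ω (fun n => my_rankSeq_mem_Icc W hW y n)
  have htx := my_tendsto_ultralim ω (fun n => my_rankSeq_mem_Icc W hW x n)
  obtain ⟨e, he0, hee⟩ := my_rankSeq_le hW x y hx
  have hadd : Tendsto (fun n => rankSeq K R W x n + e n) ω
      (nhds (ultralim ω (rankSeq K R W x) + 0)) :=
    htx.add (he0.mono_left hωT)
  have := le_of_tendsto_of_tendsto hty hadd (hee.filter_mono hωT)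
  simpa using this

end Final

/-- The rank of a finitely generated module over a unital amenable affine algebra is well
defined: it does not depend on the choice of the generating system, and it is bounded by the
minimal number of generators. -/
theorem rank_well_defined (K : Type*) [Field K] (R : Type*) [Ring R] [Algebra K R]
    [Algebra.FiniteType K R]
    (W : ℕ → Submodule K R) (hW : FolnerExhaustion K R W)
    (ω : Ultrafilter ℕ) (hω : (ω : Filter ℕ) ≤ Filter.cofinite)
    (M : Type*) [AddCommGroup M] [Module K M] [Module R M] [IsScalarTower K R M]
    {r s : ℕ} (x : Fin r → M) (y : Fin s → M)
    (hx : Submodule.span R (Set.range x) = ⊤)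
    (hy : Submodule.span R (Set.range y) = ⊤) :
    ultralim ω (rankSeq K R W x) = ultralim ω (rankSeq K R W y) ∧
    ∀ (t : ℕ) (z : Fin t → M), Submodule.span R (Set.range z) = ⊤ →
      ultralim ω (rankSeq K R W x) ≤ t := by
  constructor
  · exact le_antisymm (my_ultralim_le hW ω hω y x hy) (my_ultralim_le hW ω hω x y hx)
  · intro t z hz
    have h1 : ultralim ω (rankSeq K R W x) ≤ ultralim ω (rankSeq K R W z) :=
      my_ultralim_le hW ω hω z x hz
    have h2 : ultralim ω (rankSeq K R W z) ≤ t := by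
      have htz := my_tendsto_ultralim ω (fun n => my_rankSeq_mem_Icc W hW z n)
      exact le_of_tendsto htz (Filter.Eventually.of_forall fun n =>
        (my_rankSeq_mem_Icc W hW z n).2)
    exact h1.trans h2
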